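/- Let γ = −H ω₃ with H = f_{xy}/(f_x f_y), ω₁ = −f_x dx, ω₂ = −f_y dy, ω₃ = df. Then the second structure equation dγ = K ω₁ ∧ ω₂ holds, where K = ∂₁(H) − ∂₂(H) with ∂₁ = −(1/f_x)∂_x and ∂₂ = −(1/f_y)∂_y. -/

import Mathlib

noncomputable def px (f : ℝ × ℝ → ℝ) (z : ℝ × ℝ) : ℝ := fderiv ℝ f z (1, 0)
noncomputable def py (f : ℝ × ℝ → ℝ) (z : ℝ × ℝ) : ℝ := fderiv ℝ f z (0, 1)
noncomputable def d1 (f g : ℝ × ℝ → ℝ) (z : ℝ × ℝ) : ℝ := -(px g z) / px f z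
noncomputable def d2 (f g : ℝ × ℝ → ℝ) (z : ℝ × ℝ) : ℝ := -(py g z) / py f z

noncomputable def Hfun (f : ℝ × ℝ → ℝ) (z : ℝ × ℝ) : ℝ :=
  px (py f) z / (px f z * py f z)

noncomputable def w1 (f : ℝ × ℝ → ℝ) (z : ℝ × ℝ) : ℝ × ℝ := (-(px f z), 0)
noncomputable def w2 (f : ℝ × ℝ → ℝ) (z : ℝ × ℝ) : ℝ × ℝ := (0, -(py f z))

/-- `γ = -H ω₃ = -H df`. -/
noncomputable def gam (f : ℝ × ℝ → ℝ) (z : ℝ × ℝ) : ℝ × ℝ :=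
  (-(Hfun f z) * px f z, -(Hfun f z) * py f z)

noncomputable def curl (ω : ℝ × ℝ → ℝ × ℝ) (z : ℝ × ℝ) : ℝ :=
  px (fun w => (ω w).2) z - py (fun w => (ω w).1) z

def wedge (a b : ℝ × ℝ) : ℝ := a.1 * b.2 - a.2 * b.1

section aux

variable {f : ℝ × ℝ → ℝ} {z : ℝ × ℝ}

lemma top_add_one : ((⊤ : ℕ∞) : WithTop ℕ∞) + 1 ≤ ((⊤ : ℕ∞) : WithTop ℕ∞) := by
  exact_mod_cast le_top

lemma contDiffAt_fderiv (hf : ContDiffAt ℝ (⊤ : ℕ∞) f z) :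
    ContDiffAt ℝ (⊤ : ℕ∞) (fderiv ℝ f) z := hf.fderiv_right top_add_one

/-- `px` of a smooth function is smooth. -/
lemma contDiffAt_px (hf : ContDiffAt ℝ (⊤ : ℕ∞) f z) : ContDiffAt ℝ (⊤ : ℕ∞) (px f) z :=
  (contDiffAt_fderiv hf).clm_apply contDiffAt_const

lemma contDiffAt_py (hf : ContDiffAt ℝ (⊤ : ℕ∞) f z) : ContDiffAt ℝ (⊤ : ℕ∞) (py f) z :=
  (contDiffAt_fderiv hf).clm_apply contDiffAt_const

lemma px_eval (v u : ℝ × ℝ) (hf : ContDiffAt ℝ (⊤ : ℕ∞) f z) :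
    fderiv ℝ (fun w => fderiv ℝ f w v) z u = fderiv ℝ (fderiv ℝ f) z u v := by
  have h' : DifferentiableAt ℝ (fderiv ℝ f) z :=
    (contDiffAt_fderiv hf).differentiableAt (by simp)
  rw [fderiv_clm_apply h' (differentiableAt_const v)]
  simp

/-- Schwarz symmetry: `px (py f) = py (px f)` at a point of smoothness. -/
lemma schwarz (hf : ContDiffAt ℝ (⊤ : ℕ∞) f z) : px (py f) z = py (px f) z := by
  have hsymm : IsSymmSndFDerivAt ℝ f z := by
    apply hf.isSymmSndFDerivAt
    have : ((2 : ℕ∞) : WithTop ℕ∞) ≤ ((⊤ : ℕ∞) : WithTop ℕ∞) := by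
      exact_mod_cast (le_top : (2 : ℕ∞) ≤ ⊤)
    simpa using this
  have h1 : px (py f) z = fderiv ℝ (fderiv ℝ f) z (1, 0) (0, 1) :=
    px_eval (f := f) (z := z) (0, 1) (1, 0) hf
  have h2 : py (px f) z = fderiv ℝ (fderiv ℝ f) z (0, 1) (1, 0) :=
    px_eval (f := f) (z := z) (1, 0) (0, 1) hf
  rw [h1, h2, hsymm (1, 0) (0, 1)]

end aux

/-- the second structure equation `dγ = K ω₁ ∧ ω₂` with
`K = ∂₁(H) - ∂₂(H)`. -/
theorem stmt_6 (U : Set (ℝ × ℝ)) (hU : IsOpen U) (f : ℝ × ℝ → ℝ)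
    (hf : ContDiffOn ℝ (⊤ : ℕ∞) f U)
    (hfx : ∀ z ∈ U, px f z ≠ 0) (hfy : ∀ z ∈ U, py f z ≠ 0) :
    ∀ z ∈ U,
      curl (gam f) z =
        (d1 f (Hfun f) z - d2 f (Hfun f) z) * wedge (w1 f z) (w2 f z) := by
  intro z hz
  have hfz : ContDiffAt ℝ (⊤ : ℕ∞) f z := hf.contDiffAt (hU.mem_nhds hz)
  have ha := hfx z hz
  have hb := hfy z hz
  have hA : ContDiffAt ℝ (⊤ : ℕ∞) (px f) z := contDiffAt_px hfz
  have hB : ContDiffAt ℝ (⊤ : ℕ∞) (py f) z := contDiffAt_py hfz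
  have hC : ContDiffAt ℝ (⊤ : ℕ∞) (px (py f)) z := contDiffAt_px hB
  have hone : ((⊤ : ℕ∞) : WithTop ℕ∞) ≠ 0 := by simp
  have hAd : DifferentiableAt ℝ (px f) z := hA.differentiableAt hone
  have hBd : DifferentiableAt ℝ (py f) z := hB.differentiableAt hone
  have hCd : DifferentiableAt ℝ (px (py f)) z := hC.differentiableAt hone
  have hH : DifferentiableAt ℝ (Hfun f) z := by
    have h : DifferentiableAt ℝ (fun w => px (py f) w * (px f w * py f w)⁻¹) z :=
      hCd.mul ((hAd.mul hBd).inv (mul_ne_zero ha hb))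
    have h2 : DifferentiableAt ℝ (fun w => px (py f) w / (px f w * py f w)) z := by
      simpa [div_eq_mul_inv] using h
    exact h2
  have e1 : px (fun w => (gam f w).2) z
      = -(Hfun f z) * px (py f) z - py f z * px (Hfun f) z := by
    have h : (fun w => (gam f w).2) = fun w => -(Hfun f w) * py f w := rfl
    rw [h]
    simp only [px]
    rw [fderiv_fun_mul (show DifferentiableAt ℝ (fun w => -Hfun f w) z from hH.neg) hBd]
    simp only [ContinuousLinearMap.add_apply, ContinuousLinearMap.smul_apply,
      fderiv_fun_neg, ContinuousLinearMap.neg_apply, smul_eq_mul]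
    ring
  have e2 : py (fun w => (gam f w).1) z
      = -(Hfun f z) * py (px f) z - px f z * py (Hfun f) z := by
    have h : (fun w => (gam f w).1) = fun w => -(Hfun f w) * px f w := rfl
    rw [h]
    simp only [py]
    rw [fderiv_fun_mul (show DifferentiableAt ℝ (fun w => -Hfun f w) z from hH.neg) hAd]
    simp only [ContinuousLinearMap.add_apply, ContinuousLinearMap.smul_apply,
      fderiv_fun_neg, ContinuousLinearMap.neg_apply, smul_eq_mul]
    ring
  have hsch : px (py f) z = py (px f) z := schwarz hfz
  simp only [curl, e1, e2, d1, d2, wedge, w1, w2, hsch]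
  field_simp
  ring
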